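/- Let X be a finite set with |X| ≥ 2. A cluster system C for X is an ample saturated patchwork that contains C_triv if and only if there exists a (necessarily unique) hierarchy H on X containing C_triv — namely H = C* — such that C is the disjoint union of {X} and the sets ⟨Max(H:A)⟩ := {⋃M : ∅ ≠ M ⊊ Max(H:A)}, where A ranges over all clusters in H of cardinality at least 2. In particular, in this case |C| = 1 + Σ_{A ∈ C*, |A| > 1} (2^{|Max(C*:A)|} − 2). -/

import Mathlib

/-- Two subsets `A`, `B` are compatible if `A ∩ B ∈ {∅, A, B}`. -/
def Compatible {α : Type*} [DecidableEq α] (A B : Finset α) : Prop :=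
  A ∩ B = ∅ ∨ A ∩ B = A ∨ A ∩ B = B

instance {α : Type*} [DecidableEq α] (A B : Finset α) : Decidable (Compatible A B) := by
  unfold Compatible; infer_instance

/-- A cluster system: a collection of non-empty subsets of `X`. -/
def IsCSF {α : Type*} [DecidableEq α] (C : Finset (Finset α)) : Prop :=
  ∀ A ∈ C, A.Nonempty

/-- A hierarchy: a cluster system whose members are pairwise compatible. -/
def IsHierarchyF {α : Type*} [DecidableEq α] (C : Finset (Finset α)) : Prop :=
  IsCSF C ∧ ∀ A ∈ C, ∀ B ∈ C, Compatible A B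

/-- A saturated patchwork. -/
def IsSatPWF {α : Type*} [DecidableEq α] (C : Finset (Finset α)) : Prop :=
  ∀ A ∈ C, ∀ B ∈ C, ¬Compatible A B →
    A ∩ B ∈ C ∧ A ∪ B ∈ C ∧ A \ B ∈ C ∧ B \ A ∈ C ∧ (A ∪ B) \ (A ∩ B) ∈ C

/-- `C` is ample: for every Hasse arc `(C₂, C₁)`, `C₁ - C₂ ∈ C`. -/
def IsAmpleF {α : Type*} [DecidableEq α] (C : Finset (Finset α)) : Prop :=
  ∀ C₁ ∈ C, ∀ C₂ ∈ C, C₂ ⊂ C₁ → (∀ B ∈ C, ¬(C₂ ⊂ B ∧ B ⊂ C₁)) → C₁ \ C₂ ∈ C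

/-- The trivial cluster system: all singletons together with `X` itself. -/
def CtrivF (α : Type*) [Fintype α] [DecidableEq α] : Finset (Finset α) :=
  (Finset.univ.image fun x : α => ({x} : Finset α)) ∪ {Finset.univ}

/-- The adjoint `C*`. -/
def adjF {α : Type*} [Fintype α] [DecidableEq α] (C : Finset (Finset α)) :
    Finset (Finset α) :=
  Finset.univ.filter (fun A => A.Nonempty ∧ ∀ B ∈ C, Compatible A B)

/-- `Max(H:A)`: maximal elements of `{B ∈ H : B ⊆ A} - {A}`. -/
def MaxBelowF {α : Type*} [DecidableEq α] (H : Finset (Finset α)) (A : Finset α) :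
    Finset (Finset α) :=
  H.filter (fun B => B ⊆ A ∧ B ≠ A ∧ ∀ B' ∈ H, B' ⊆ A → B' ≠ A → B ⊆ B' → B = B')

/-- `⟨Max(H:A)⟩ = {⋃M : ∅ ≠ M ⊊ Max(H:A)}`. -/
def genF {α : Type*} [DecidableEq α] (H : Finset (Finset α)) (A : Finset α) :
    Finset (Finset α) :=
  ((MaxBelowF H A).powerset.filter
    (fun M => M.Nonempty ∧ M ≠ MaxBelowF H A)).image (fun M => M.sup id)

section Toolkit
variable {α : Type*} [DecidableEq α]

lemma compat_comm {A B : Finset α} : Compatible A B ↔ Compatible B A := by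
  unfold Compatible; rw [Finset.inter_comm]; tauto

lemma compat_of_subset {A B : Finset α} (h : A ⊆ B) : Compatible A B :=
  Or.inr (Or.inl (Finset.inter_eq_left.2 h))

lemma compat_of_subset' {A B : Finset α} (h : B ⊆ A) : Compatible A B :=
  Or.inr (Or.inr (Finset.inter_eq_right.2 h))

lemma compat_of_disjoint {A B : Finset α} (h : A ∩ B = ∅) : Compatible A B := Or.inl h

lemma not_compat_iff {A B : Finset α} :
    ¬Compatible A B ↔ (A ∩ B).Nonempty ∧ ¬A ⊆ B ∧ ¬B ⊆ A := by
  unfold Compatible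
  rw [Finset.inter_eq_left, Finset.inter_eq_right, ← Finset.not_nonempty_iff_eq_empty]
  tauto

/-- a nonempty proper subset forces card ≥ 2 on the big set -/
lemma two_le_card_of_ssub {A B : Finset α} (hne : A.Nonempty) (h : A ⊂ B) : 2 ≤ B.card := by
  have h1 : 1 ≤ A.card := Finset.card_pos.2 hne
  have := Finset.card_lt_card h
  omega

lemma mem_sup_id {M : Finset (Finset α)} {x : α} : x ∈ M.sup id ↔ ∃ P ∈ M, x ∈ P := by
  rw [Finset.mem_sup]; rfl

lemma subset_sup_id {M : Finset (Finset α)} {P : Finset α} (h : P ∈ M) : P ⊆ M.sup id :=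
  Finset.le_sup (f := id) h

variable {Pts : Finset (Finset α)}
  (hne : ∀ P ∈ Pts, P.Nonempty)
  (hdisj : ∀ P ∈ Pts, ∀ P' ∈ Pts, P ≠ P' → P ∩ P' = ∅)

section DisjFam
include hdisj

lemma sup_inter_sup {M M' : Finset (Finset α)} (hM : M ⊆ Pts) (hM' : M' ⊆ Pts) :
    (M.sup id) ∩ (M'.sup id) = (M ∩ M').sup id := by
  ext x
  simp only [Finset.mem_inter, mem_sup_id]
  constructor
  · rintro ⟨⟨P, hP, hx⟩, ⟨P', hP', hx'⟩⟩
    have : P = P' := by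
      by_contra hne'
      have := hdisj P (hM hP) P' (hM' hP') hne'
      have : x ∈ P ∩ P' := Finset.mem_inter.2 ⟨hx, hx'⟩
      simp_all
    exact ⟨P, ⟨hP, this ▸ hP'⟩, hx⟩
  · rintro ⟨P, hP, hx⟩
    exact ⟨⟨P, hP.1, hx⟩, ⟨P, hP.2, hx⟩⟩

lemma sup_sdiff_sup {M M' : Finset (Finset α)} (hM : M ⊆ Pts) (hM' : M' ⊆ Pts) :
    (M.sup id) \ (M'.sup id) = (M \ M').sup id := by
  ext x
  simp only [Finset.mem_sdiff, mem_sup_id]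
  constructor
  · rintro ⟨⟨P, hP, hx⟩, hnot⟩
    refine ⟨P, ⟨hP, fun hmem => hnot ⟨P, hmem, hx⟩⟩, hx⟩
  · rintro ⟨P, hP, hx⟩
    refine ⟨⟨P, hP.1, hx⟩, ?_⟩
    rintro ⟨P', hP', hx'⟩
    have : P = P' := by
      by_contra hne'
      have := hdisj P (hM hP.1) P' (hM' hP') hne'
      have : x ∈ P ∩ P' := Finset.mem_inter.2 ⟨hx, hx'⟩
      simp_all
    exact hP.2 (this ▸ hP')

lemma mem_of_subset_sup {M : Finset (Finset α)} {P : Finset α} (hM : M ⊆ Pts) (hP : P ∈ Pts)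
    (hPne : P.Nonempty) (hsub : P ⊆ M.sup id) : P ∈ M := by
  obtain ⟨x, hx⟩ := hPne
  obtain ⟨P', hP', hx'⟩ := mem_sup_id.1 (hsub hx)
  have : P = P' := by
    by_contra hne'
    have := hdisj P hP P' (hM hP') hne'
    have : x ∈ P ∩ P' := Finset.mem_inter.2 ⟨hx, hx'⟩
    simp_all
  exact this ▸ hP'

end DisjFam

include hne hdisj in
lemma filter_sup_eq {M : Finset (Finset α)} (hM : M ⊆ Pts) :
    Pts.filter (· ⊆ M.sup id) = M := by
  ext P
  rw [Finset.mem_filter]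
  constructor
  · rintro ⟨hP, hsub⟩
    exact mem_of_subset_sup hdisj hM hP (hne P hP) hsub
  · intro hP
    exact ⟨hM hP, subset_sup_id hP⟩

include hne in
lemma sup_nonempty_of_nonempty {M : Finset (Finset α)} (hM : M ⊆ Pts) (h : M.Nonempty) :
    (M.sup id).Nonempty := by
  obtain ⟨P, hP⟩ := h
  obtain ⟨x, hx⟩ := hne P (hM hP)
  exact ⟨x, subset_sup_id hP hx⟩

include hne hdisj in
lemma sup_id_injOn {M M' : Finset (Finset α)} (hM : M ⊆ Pts) (hM' : M' ⊆ Pts)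
    (h : M.sup id = M'.sup id) : M = M' := by
  rw [← filter_sup_eq hne hdisj hM, ← filter_sup_eq hne hdisj hM', h]

include hne hdisj in
/-- the sup of a proper subfamily misses a part entirely. -/
lemma sup_ne_of_proper {M : Finset (Finset α)} (hM : M ⊆ Pts) (hMne : M ≠ Pts) {P : Finset α}
    (hP : P ∈ Pts) (hPM : P ∉ M) : P ∩ M.sup id = ∅ := by
  rw [← Finset.not_nonempty_iff_eq_empty]
  rintro ⟨x, hx⟩
  rw [Finset.mem_inter] at hx
  obtain ⟨P', hP', hx'⟩ := mem_sup_id.1 hx.2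
  have : P = P' := by
    by_contra hne'
    have := hdisj P hP P' (hM hP') hne'
    have : x ∈ P ∩ P' := Finset.mem_inter.2 ⟨hx.1, hx'⟩
    simp_all
  exact hPM (this ▸ hP')

lemma mem_genF_iff {H : Finset (Finset α)} {A S : Finset α} :
    S ∈ genF H A ↔ ∃ M, M ⊆ MaxBelowF H A ∧ M.Nonempty ∧ M ≠ MaxBelowF H A ∧ S = M.sup id := by
  unfold genF
  simp only [Finset.mem_image, Finset.mem_filter, Finset.mem_powerset]
  constructor
  · rintro ⟨M, ⟨h1, h2, h3⟩, h4⟩; exact ⟨M, h1, h2, h3, h4.symm⟩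
  · rintro ⟨M, h1, h2, h3, h4⟩; exact ⟨M, ⟨h1, h2, h3⟩, h4.symm⟩

lemma mem_maxBelow_iff {H : Finset (Finset α)} {A B : Finset α} :
    B ∈ MaxBelowF H A ↔ B ∈ H ∧ B ⊆ A ∧ B ≠ A ∧
      ∀ B' ∈ H, B' ⊆ A → B' ≠ A → B ⊆ B' → B = B' := by
  unfold MaxBelowF; exact Finset.mem_filter

/-- every proper sub-member of `A` in `H` lies below a maximal one -/
lemma exists_maxBelow {H : Finset (Finset α)} {A B : Finset α} (hB : B ∈ H) (hBA : B ⊆ A)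
    (hBne : B ≠ A) : ∃ P ∈ MaxBelowF H A, B ⊆ P := by
  classical
  set F := H.filter (fun B' => B' ⊆ A ∧ B' ≠ A ∧ B ⊆ B') with hF
  have hFne : F.Nonempty := ⟨B, by simp [hF, hB, hBA, hBne]⟩
  obtain ⟨P, hPF, hmax⟩ : ∃ P ∈ F, ∀ x ∈ F, ¬ P < x := by
    obtain ⟨P, hP⟩ := F.exists_maximal hFne
    exact ⟨P, hP.1, fun x hx hlt => lt_irrefl P (lt_of_lt_of_le hlt (hP.2 hx hlt.le))⟩
  rw [hF, Finset.mem_filter] at hPF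
  refine ⟨P, mem_maxBelow_iff.2 ⟨hPF.1, hPF.2.1, hPF.2.2.1, ?_⟩, hPF.2.2.2⟩
  intro B' hB' hB'A hB'ne hPB'
  by_contra hne'
  exact hmax B' (by simp [hF, hB', hB'A, hB'ne, hPF.2.2.2.trans hPB'])
    (Finset.ssubset_iff_subset_ne.2 ⟨hPB', hne'⟩)

end Toolkit
section Hier
variable {α : Type*} [DecidableEq α] {H : Finset (Finset α)} {A : Finset α}

lemma sup_subset_of_forall {M : Finset (Finset α)} {A : Finset α} (h : ∀ P ∈ M, P ⊆ A) :
    M.sup id ⊆ A := by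
  intro x hx
  obtain ⟨P, hP, hxP⟩ := mem_sup_id.1 hx
  exact h P hP hxP

lemma mem_empty_absurd {x : α} {s : Finset α} (hx : x ∈ s) (h : s = ∅) : False := by
  rw [h] at hx; exact Finset.notMem_empty x hx

lemma maxBelow_disj (hHcomp : ∀ B ∈ H, ∀ B' ∈ H, Compatible B B') :
    ∀ P ∈ MaxBelowF H A, ∀ P' ∈ MaxBelowF H A, P ≠ P' → P ∩ P' = ∅ := by
  intro P hP P' hP' hne'
  rw [mem_maxBelow_iff] at hP hP'
  rcases hHcomp P hP.1 P' hP'.1 with h | h | h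
  · exact h
  · exact absurd (hP.2.2.2 P' hP'.1 hP'.2.1 hP'.2.2.1 (Finset.inter_eq_left.1 h)) hne'
  · exact absurd (hP'.2.2.2 P hP.1 hP.2.1 hP.2.2.1 (Finset.inter_eq_right.1 h)).symm hne'

lemma maxBelow_sup (hA : A ∈ H) (h2 : 2 ≤ A.card) (hsingA : ∀ x ∈ A, {x} ∈ H) :
    (MaxBelowF H A).sup id = A := by
  apply Finset.Subset.antisymm
  · exact sup_subset_of_forall fun P hP => (mem_maxBelow_iff.1 hP).2.1
  · intro x hx
    have hxA : ({x} : Finset α) ≠ A := by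
      intro h; rw [← h] at h2; simp at h2
    obtain ⟨P, hP, hxP⟩ := exists_maxBelow (hsingA x hx) (Finset.singleton_subset_iff.2 hx) hxA
    exact mem_sup_id.2 ⟨P, hP, hxP (Finset.mem_singleton_self x)⟩

lemma maxBelow_card2 (hA : A ∈ H) (h2 : 2 ≤ A.card) (hsingA : ∀ x ∈ A, {x} ∈ H) :
    2 ≤ (MaxBelowF H A).card := by
  have hsup := maxBelow_sup hA h2 hsingA
  have hAne : A.Nonempty := Finset.card_pos.1 (by omega)
  have hMne : (MaxBelowF H A).Nonempty := by
    by_contra h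
    rw [Finset.not_nonempty_iff_eq_empty] at h
    rw [h, Finset.sup_empty] at hsup
    exact hAne.ne_empty hsup.symm
  by_contra h
  push_neg at h
  interval_cases hc : (MaxBelowF H A).card
  · rw [Finset.card_eq_zero] at hc; exact (hMne.ne_empty hc)
  · rw [Finset.card_eq_one] at hc
    obtain ⟨P, hP⟩ := hc
    rw [hP, Finset.sup_singleton] at hsup
    have := mem_maxBelow_iff.1 (hP ▸ Finset.mem_singleton_self P : P ∈ MaxBelowF H A)
    exact this.2.2.1 hsup

lemma genF_props (hHne : ∀ B ∈ H, B.Nonempty)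
    (hHcomp : ∀ B ∈ H, ∀ B' ∈ H, Compatible B B')
    (hA : A ∈ H) (h2 : 2 ≤ A.card) (hsingA : ∀ x ∈ A, {x} ∈ H)
    {S : Finset α} (hS : S ∈ genF H A) : S.Nonempty ∧ S ⊆ A ∧ S ≠ A := by
  obtain ⟨M, hM, hMne, hMneq, rfl⟩ := mem_genF_iff.1 hS
  have hPne : ∀ P ∈ MaxBelowF H A, P.Nonempty := fun P hP => hHne P (mem_maxBelow_iff.1 hP).1
  have hPdisj := maxBelow_disj (A := A) hHcomp
  refine ⟨sup_nonempty_of_nonempty hPne hM hMne, ?_, ?_⟩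
  · exact sup_subset_of_forall fun P hP => (mem_maxBelow_iff.1 (hM hP)).2.1
  · obtain ⟨P₀, hP₀, hP₀M⟩ := Finset.exists_of_ssubset (Finset.ssubset_iff_subset_ne.2 ⟨hM, hMneq⟩)
    have hdisj := sup_ne_of_proper (Pts := MaxBelowF H A) hPne hPdisj hM hMneq hP₀ hP₀M
    intro hEq
    obtain ⟨x, hx⟩ := hPne P₀ hP₀
    have hxA : x ∈ M.sup id := hEq ▸ (mem_maxBelow_iff.1 hP₀).2.1 hx
    exact mem_empty_absurd (Finset.mem_inter.2 ⟨hx, hxA⟩) hdisj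

end Hier

section Main
variable {α : Type*} [DecidableEq α]

def GoodOn (U : Finset α) (C : Finset (Finset α)) : Prop :=
  (∀ A ∈ C, A ⊆ U) ∧ (∀ A ∈ C, A.Nonempty) ∧ U ∈ C ∧ (∀ x ∈ U, {x} ∈ C) ∧
    IsSatPWF C ∧ IsAmpleF C

def HierOn (U : Finset α) (H : Finset (Finset α)) : Prop :=
  (∀ A ∈ H, A ⊆ U) ∧ (∀ A ∈ H, A.Nonempty) ∧ U ∈ H ∧ (∀ x ∈ U, {x} ∈ H) ∧
    ∀ A ∈ H, ∀ B ∈ H, Compatible A B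

lemma TLL {U : Finset α} {C : Finset (Finset α)} (hG : GoodOn U C) (h2 : 2 ≤ U.card) :
    ∃ parts : Finset (Finset α),
      (∀ P ∈ parts, P ∈ C) ∧ (∀ P ∈ parts, P.Nonempty) ∧ (∀ P ∈ parts, P ⊆ U) ∧
      (∀ P ∈ parts, ∀ P' ∈ parts, P ≠ P' → P ∩ P' = ∅) ∧ parts.sup id = U ∧
      2 ≤ parts.card ∧
      (∀ P ∈ parts, ∀ A ∈ C, Compatible A P) ∧
      (∀ T ⊆ parts, T.Nonempty → T.sup id ∈ C) ∧
      (∀ A ∈ C, A ≠ U → (∃ P ∈ parts, A ⊆ P) ∨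
        (∃ T, T ⊆ parts ∧ T.Nonempty ∧ T ≠ parts ∧ A = T.sup id)) := by
  classical
  obtain ⟨hsub, hne, hUC, hsing, hsat, hamp⟩ := hG
  set N := C.filter (fun M => M ≠ U ∧ ∀ B ∈ C, M ⊆ B → B = M ∨ B = U) with hN
  have hNmem : ∀ M, M ∈ N ↔ M ∈ C ∧ M ≠ U ∧ ∀ B ∈ C, M ⊆ B → B = M ∨ B = U := by
    intro M; rw [hN, Finset.mem_filter]
  -- t1 : climb to a maximal element
  have t1 : ∀ A ∈ C, A ≠ U → ∃ M ∈ N, A ⊆ M := by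
    intro A hA hAU
    set F := C.filter (fun B => B ≠ U ∧ A ⊆ B) with hF
    have hFne : F.Nonempty := ⟨A, by simp [hF, hA, hAU]⟩
    obtain ⟨M, hMF, hmax⟩ : ∃ M ∈ F, ∀ x ∈ F, ¬ M < x := by
      obtain ⟨M, hM⟩ := F.exists_maximal hFne
      exact ⟨M, hM.1, fun x hx hlt => lt_irrefl M (lt_of_lt_of_le hlt (hM.2 hx hlt.le))⟩
    rw [hF, Finset.mem_filter] at hMF
    refine ⟨M, (hNmem M).2 ⟨hMF.1, hMF.2.1, ?_⟩, hMF.2.2⟩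
    intro B hB hMB
    by_contra hcon
    push_neg at hcon
    exact hmax B (by simp [hF, hB, hcon.2, hMF.2.2.trans hMB])
      (Finset.ssubset_iff_subset_ne.2 ⟨hMB, fun h => hcon.1 h.symm⟩)
  -- Q := U \ M ∈ C by ampleness
  have tQ : ∀ M ∈ N, U \ M ∈ C := by
    intro M hM
    rw [hNmem] at hM
    apply hamp U hUC M hM.1
    · exact Finset.ssubset_iff_subset_ne.2 ⟨hsub M hM.1, hM.2.1⟩
    · rintro B hB ⟨h1, h2'⟩
      rcases hM.2.2 B hB h1.1 with h | h
      · exact h1.2 (h ▸ Finset.Subset.rfl)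
      · exact h2'.2 (h ▸ Finset.Subset.rfl)
  have tQne : ∀ M ∈ N, (U \ M).Nonempty := fun M hM => hne _ (tQ M hM)
  have tQneU : ∀ M ∈ N, U \ M ≠ U := by
    intro M hM h
    rw [hNmem] at hM
    obtain ⟨x, hx⟩ := hne M hM.1
    have hxU : x ∈ U := hsub M hM.1 hx
    rw [← h] at hxU
    exact (Finset.mem_sdiff.1 hxU).2 hx
  -- all pairs of distinct maximal elements have union U
  have t2 : ∀ M ∈ N, ∀ M' ∈ N, M ≠ M' → M ∪ M' = U := by
    intro M hM M' hM' hMM'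
    have hMn := (hNmem M).1 hM
    have hM'n := (hNmem M').1 hM'
    have hnn : ¬M ⊆ M' := by
      intro h
      rcases hMn.2.2 M' hM'n.1 h with h' | h'
      · exact hMM' h'.symm
      · exact hM'n.2.1 h'
    have hnn' : ¬M' ⊆ M := by
      intro h
      rcases hM'n.2.2 M hMn.1 h with h' | h'
      · exact hMM' h'
      · exact hMn.2.1 h'
    by_cases hc : Compatible M M'
    · -- compatible: disjoint
      have hdisj : M ∩ M' = ∅ := by
        rcases hc with h | h | h
        · exact h
        · exact absurd (Finset.inter_eq_left.1 h) hnn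
        · exact absurd (Finset.inter_eq_right.1 h) hnn'
      obtain ⟨M'', hM'', hQM''⟩ := t1 (U \ M) (tQ M hM) (tQneU M hM)
      have hM'sub : M' ⊆ U \ M := by
        intro x hx
        rw [Finset.mem_sdiff]
        refine ⟨hsub M' hM'n.1 hx, fun hxM => ?_⟩
        exact mem_empty_absurd (Finset.mem_inter.2 ⟨hxM, hx⟩) hdisj
      have hM''n := (hNmem M'').1 hM''
      have : M'' = M' := by
        rcases hM'n.2.2 M'' hM''n.1 (hM'sub.trans hQM'') with h | h
        · exact h
        · exact absurd h hM''n.2.1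
      apply Finset.Subset.antisymm
      · exact Finset.union_subset (hsub M hMn.1) (hsub M' hM'n.1)
      · intro x hx
        by_cases hxM : x ∈ M
        · exact Finset.mem_union_left _ hxM
        · exact Finset.mem_union_right _ (this ▸ hQM'' (Finset.mem_sdiff.2 ⟨hx, hxM⟩))
    · -- incompatible
      have hcup : M ∪ M' ∈ C := (hsat M hMn.1 M' hM'n.1 hc).2.1
      rcases hMn.2.2 (M ∪ M') hcup Finset.subset_union_left with h | h
      · exact absurd (h ▸ Finset.subset_union_right) hnn'
      · exact h
  -- pair unions of parts are in C
  have q4 : ∀ M ∈ N, ∀ M' ∈ N, M ≠ M' → (U \ M) ∪ (U \ M') ∈ C := by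
    intro M hM M' hM' hMM'
    have hMn := (hNmem M).1 hM
    have hM'n := (hNmem M').1 hM'
    have hMU := hsub M hMn.1
    have hM'U := hsub M' hM'n.1
    have hun := t2 M hM M' hM' hMM'
    by_cases hc : Compatible M M'
    · have hnn : ¬M ⊆ M' := by
        intro h
        rcases hMn.2.2 M' hM'n.1 h with h' | h'
        · exact hMM' h'.symm
        · exact hM'n.2.1 h'
      have hnn' : ¬M' ⊆ M := by
        intro h
        rcases hM'n.2.2 M hMn.1 h with h' | h'
        · exact hMM' h'
        · exact hMn.2.1 h'
      have hdisj : M ∩ M' = ∅ := by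
        rcases hc with h | h | h
        · exact h
        · exact absurd (Finset.inter_eq_left.1 h) hnn
        · exact absurd (Finset.inter_eq_right.1 h) hnn'
      have : (U \ M) ∪ (U \ M') = U := by
        ext x
        simp only [Finset.mem_union, Finset.mem_sdiff]
        constructor
        · rintro (⟨h, _⟩ | ⟨h, _⟩) <;> exact h
        · intro hx
          by_cases hxM : x ∈ M
          · exact Or.inr ⟨hx, fun hxM' =>
              mem_empty_absurd (Finset.mem_inter.2 ⟨hxM, hxM'⟩) hdisj⟩
          · exact Or.inl ⟨hx, hxM⟩
      rw [this]; exact hUC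
    · have hΔ : (M ∪ M') \ (M ∩ M') ∈ C := (hsat M hMn.1 M' hM'n.1 hc).2.2.2.2
      have : (U \ M) ∪ (U \ M') = (M ∪ M') \ (M ∩ M') := by
        rw [hun]
        ext x
        simp only [Finset.mem_union, Finset.mem_sdiff, Finset.mem_inter]
        constructor
        · rintro (⟨h, h'⟩ | ⟨h, h'⟩) <;> exact ⟨h, by tauto⟩
        · rintro ⟨h, h'⟩
          by_cases hxM : x ∈ M
          · exact Or.inr ⟨h, by tauto⟩
          · exact Or.inl ⟨h, hxM⟩
      rw [this]; exact hΔ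
  -- N has at least two elements
  have hNne : N.Nonempty := by
    have hUne : U.Nonempty := Finset.card_pos.1 (by omega)
    obtain ⟨x, hx⟩ := hUne
    have hxU : ({x} : Finset α) ≠ U := by
      intro h; rw [← h] at h2; simp at h2
    obtain ⟨M, hM, _⟩ := t1 {x} (hsing x hx) hxU
    exact ⟨M, hM⟩
  have hNtwo : ∃ M₁ ∈ N, ∃ M₂ ∈ N, M₁ ≠ M₂ := by
    obtain ⟨M, hM⟩ := hNne
    obtain ⟨M', hM', hQM'⟩ := t1 (U \ M) (tQ M hM) (tQneU M hM)
    refine ⟨M, hM, M', hM', fun h => ?_⟩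
    obtain ⟨x, hx⟩ := tQne M hM
    have := hQM' hx
    rw [← h] at this
    exact (Finset.mem_sdiff.1 hx).2 this
  set parts := N.image (fun M => U \ M) with hparts
  have hpmem : ∀ P, P ∈ parts ↔ ∃ M ∈ N, U \ M = P := by
    intro P; rw [hparts, Finset.mem_image]
  have hsdiff_inj : ∀ M ∈ N, ∀ M' ∈ N, U \ M = U \ M' → M = M' := by
    intro M hM M' hM' h
    have h1 : M ⊆ U := hsub M ((hNmem M).1 hM).1
    have h2' : M' ⊆ U := hsub M' ((hNmem M').1 hM').1
    rw [← Finset.sdiff_sdiff_eq_self h1, h, Finset.sdiff_sdiff_eq_self h2']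
  have hpC : ∀ P ∈ parts, P ∈ C := by
    intro P hP; obtain ⟨M, hM, rfl⟩ := (hpmem P).1 hP; exact tQ M hM
  have hpne : ∀ P ∈ parts, P.Nonempty := fun P hP => hne P (hpC P hP)
  have hpU : ∀ P ∈ parts, P ⊆ U := fun P hP => hsub P (hpC P hP)
  have hpdisj : ∀ P ∈ parts, ∀ P' ∈ parts, P ≠ P' → P ∩ P' = ∅ := by
    intro P hP P' hP' hne'
    obtain ⟨M, hM, rfl⟩ := (hpmem P).1 hP
    obtain ⟨M', hM', rfl⟩ := (hpmem P').1 hP'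
    have hMM' : M ≠ M' := fun h => hne' (h ▸ rfl)
    rw [← Finset.sdiff_union_distrib, t2 M hM M' hM' hMM', Finset.sdiff_self]
  have hpcard : 2 ≤ parts.card := by
    obtain ⟨M₁, hM₁, M₂, hM₂, h12⟩ := hNtwo
    apply Finset.one_lt_card.2
    refine ⟨U \ M₁, (hpmem _).2 ⟨M₁, hM₁, rfl⟩, U \ M₂, (hpmem _).2 ⟨M₂, hM₂, rfl⟩, ?_⟩
    exact fun h => h12 (hsdiff_inj M₁ hM₁ M₂ hM₂ h)
  have q4parts : ∀ P ∈ parts, ∀ P' ∈ parts, P ≠ P' → P ∪ P' ∈ C := by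
    intro P hP P' hP' hne'
    obtain ⟨M, hM, rfl⟩ := (hpmem P).1 hP
    obtain ⟨M', hM', rfl⟩ := (hpmem P').1 hP'
    exact q4 M hM M' hM' (fun h => hne' (h ▸ rfl))
  -- closure of unions of parts
  have punion : ∀ T ⊆ parts, T.Nonempty → T.sup id ∈ C := by
    suffices claim : ∀ n, ∀ T ⊆ parts, T.Nonempty → T.card = n → T.sup id ∈ C by
      intro T hT hTne; exact claim T.card T hT hTne rfl
    intro n
    induction n using Nat.strong_induction_on with
    | _ n IH =>
      intro T hTp hTne hTcard
      rcases Nat.lt_or_ge n 3 with hn3 | hn3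
      · -- n = 1 or 2
        have hn1 : 1 ≤ n := by
          rw [← hTcard]; exact Finset.card_pos.2 hTne
        interval_cases n
        · obtain ⟨P, rfl⟩ := Finset.card_eq_one.1 hTcard
          rw [Finset.sup_singleton]
          exact hpC P (hTp (Finset.mem_singleton_self P))
        · obtain ⟨P, P', hPP', rfl⟩ := Finset.card_eq_two.1 hTcard
          have h1 : P ∈ parts := hTp (by simp)
          have h2' : P' ∈ parts := hTp (by simp)
          rw [Finset.sup_insert, Finset.sup_singleton]
          exact q4parts P h1 P' h2' hPP'
      · -- n ≥ 3
        obtain ⟨t, ht⟩ := hTne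
        set T' := T.erase t with hT'
        have hT'card : T'.card = n - 1 := by
          rw [hT', Finset.card_erase_of_mem ht, hTcard]
        have hT'p : T' ⊆ parts := (Finset.erase_subset t T).trans hTp
        have hT'ne : T'.Nonempty := Finset.card_pos.1 (by omega)
        obtain ⟨s, hs⟩ := hT'ne
        have hs'ex : (T'.erase s).Nonempty := by
          apply Finset.card_pos.1
          rw [Finset.card_erase_of_mem hs]
          omega
        obtain ⟨s', hs'⟩ := hs'ex
        have hs'T' : s' ∈ T' := Finset.mem_of_mem_erase hs'
        have hss' : s' ≠ s := Finset.ne_of_mem_erase hs'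
        have hst : s ≠ t := Finset.ne_of_mem_erase hs
        have hs't : s' ≠ t := Finset.ne_of_mem_erase hs'T'
        have hsp : s ∈ parts := hT'p hs
        have hs'p : s' ∈ parts := hT'p hs'T'
        have htp : t ∈ parts := hTp ht
        have hU' : T'.sup id ∈ C := IH (n - 1) (by omega) T' hT'p ⟨s, hs⟩ hT'card
        have hW : s ∪ t ∈ C := q4parts s hsp t htp hst
        have hsU' : s ⊆ T'.sup id := subset_sup_id hs
        have hs'U' : s' ⊆ T'.sup id := subset_sup_id hs'T'
        have htdisj : ∀ r ∈ T', r ∩ t = ∅ := fun r hr =>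
          hpdisj r (hT'p hr) t htp (Finset.ne_of_mem_erase hr)
        have hint : T'.sup id ∩ (s ∪ t) = s := by
          apply Finset.Subset.antisymm
          · intro x hx
            rw [Finset.mem_inter] at hx
            obtain ⟨r, hr, hxr⟩ := mem_sup_id.1 hx.1
            rcases Finset.mem_union.1 hx.2 with h | h
            · exact h
            · exact absurd (Finset.mem_inter.2 ⟨hxr, h⟩)
                (fun hm => mem_empty_absurd hm (htdisj r hr))
          · exact Finset.subset_inter hsU' Finset.subset_union_left
        have hnc : ¬Compatible (T'.sup id) (s ∪ t) := by
          rw [not_compat_iff]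
          refine ⟨?_, ?_, ?_⟩
          · rw [hint]; exact hpne s hsp
          · intro h
            obtain ⟨x, hx⟩ := hpne s' hs'p
            have hxst := h (hs'U' hx)
            have hds : s' ∩ s = ∅ := hpdisj s' hs'p s hsp hss'
            have hdt : s' ∩ t = ∅ := hpdisj s' hs'p t htp hs't
            rcases Finset.mem_union.1 hxst with h' | h'
            · exact mem_empty_absurd (Finset.mem_inter.2 ⟨hx, h'⟩) hds
            · exact mem_empty_absurd (Finset.mem_inter.2 ⟨hx, h'⟩) hdt
          · intro h
            obtain ⟨x, hx⟩ := hpne t htp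
            have hxU' := h (Finset.mem_union_right _ hx)
            obtain ⟨r, hr, hxr⟩ := mem_sup_id.1 hxU'
            exact mem_empty_absurd (Finset.mem_inter.2 ⟨hxr, hx⟩) (htdisj r hr)
        have hcup : T'.sup id ∪ (s ∪ t) ∈ C := (hsat _ hU' _ hW hnc).2.1
        have : T.sup id = T'.sup id ∪ (s ∪ t) := by
          have hins : T = insert t T' := by
            rw [hT', Finset.insert_erase ht]
          rw [hins, Finset.sup_insert]
          ext x
          simp only [id_eq, Finset.mem_union, Finset.sup_eq_union]
          constructor
          · rintro (h | h)
            · exact Or.inr (Or.inr h)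
            · exact Or.inl h
          · rintro (h | h | h)
            · exact Or.inr h
            · exact Or.inr (hsU' h)
            · exact Or.inl h
        rw [this]; exact hcup
  -- the parts cover U
  have hcover : parts.sup id = U := by
    have hZ : parts.sup id ∈ C := punion parts Finset.Subset.rfl
      (Finset.card_pos.1 (by omega))
    by_contra hZU
    obtain ⟨M, hM, hZM⟩ := t1 _ hZ hZU
    have hPp : U \ M ∈ parts := (hpmem _).2 ⟨M, hM, rfl⟩
    obtain ⟨x, hx⟩ := tQne M hM
    have : x ∈ M := hZM (subset_sup_id hPp hx)
    exact (Finset.mem_sdiff.1 hx).2 this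
  -- every part is compatible with every member of C
  have p5 : ∀ P ∈ parts, ∀ A ∈ C, Compatible A P := by
    intro P hP A hA
    obtain ⟨M, hM, rfl⟩ := (hpmem P).1 hP
    have hMn := (hNmem M).1 hM
    by_contra hc
    rw [not_compat_iff] at hc
    obtain ⟨hint, hAP, hPA⟩ := hc
    have hAU : A ≠ U := by
      rintro rfl
      exact hPA (Finset.sdiff_subset)
    have hAM : (A ∩ M).Nonempty := by
      have : ¬A ⊆ U \ M := hAP
      rw [Finset.not_subset] at this
      obtain ⟨x, hxA, hxP⟩ := this
      have hxU : x ∈ U := hsub A hA hxA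
      have hxM : x ∈ M := by
        by_contra h
        exact hxP (Finset.mem_sdiff.2 ⟨hxU, h⟩)
      exact ⟨x, Finset.mem_inter.2 ⟨hxA, hxM⟩⟩
    have hMA : ¬M ⊆ A := by
      intro h
      rcases hMn.2.2 A hA h with h' | h'
      · rw [h'] at hint
        obtain ⟨x, hx⟩ := hint
        rw [Finset.mem_inter, Finset.mem_sdiff] at hx
        exact hx.2.2 hx.1
      · exact hAU h'
    have hAM2 : ¬A ⊆ M := by
      intro h
      obtain ⟨x, hx⟩ := hint
      rw [Finset.mem_inter, Finset.mem_sdiff] at hx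
      exact hx.2.2 (h hx.1)
    have hncAM : ¬Compatible A M := not_compat_iff.2 ⟨hAM, hAM2, hMA⟩
    have hcup : A ∪ M ∈ C := (hsat A hA M hMn.1 hncAM).2.1
    rcases hMn.2.2 (A ∪ M) hcup Finset.subset_union_right with h | h
    · exact hAM2 (h ▸ Finset.subset_union_left)
    · apply hPA
      intro x hx
      rw [Finset.mem_sdiff] at hx
      have : x ∈ A ∪ M := h ▸ hx.1
      rcases Finset.mem_union.1 this with h' | h'
      · exact h'
      · exact absurd h' hx.2
  -- decomposition of members of C
  have p6 : ∀ A ∈ C, A ≠ U → (∃ P ∈ parts, A ⊆ P) ∨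
      (∃ T, T ⊆ parts ∧ T.Nonempty ∧ T ≠ parts ∧ A = T.sup id) := by
    intro A hA hAU
    by_cases hE : ∃ P ∈ parts, A ⊆ P
    · exact Or.inl hE
    · push_neg at hE
      right
      set T := parts.filter (· ⊆ A) with hT
      have hTsub : T ⊆ parts := Finset.filter_subset _ _
      have hAT : A = T.sup id := by
        apply Finset.Subset.antisymm
        · intro x hx
          have hxU : x ∈ U := hsub A hA hx
          rw [← hcover] at hxU
          obtain ⟨P, hP, hxP⟩ := mem_sup_id.1 hxU
          rcases p5 P hP A hA with h | h | h
          · exact absurd (Finset.mem_inter.2 ⟨hx, hxP⟩)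
              (fun hm => mem_empty_absurd hm h)
          · exact absurd (Finset.inter_eq_left.1 h) (hE P hP)
          · have hPA : P ⊆ A := Finset.inter_eq_right.1 h
            exact mem_sup_id.2 ⟨P, Finset.mem_filter.2 ⟨hP, hPA⟩, hxP⟩
        · exact sup_subset_of_forall fun P hP => (Finset.mem_filter.1 hP).2
      refine ⟨T, hTsub, ?_, ?_, hAT⟩
      · by_contra h
        rw [Finset.not_nonempty_iff_eq_empty] at h
        rw [h, Finset.sup_empty] at hAT
        exact (hne A hA).ne_empty hAT
      · intro h
        rw [h, hcover] at hAT
        exact hAU hAT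
  exact ⟨parts, hpC, hpne, hpU, hpdisj, hcover, hpcard, p5, punion, p6⟩

end Main
section MainThm
variable {α : Type*} [DecidableEq α]

theorem mainThm : ∀ (n : ℕ) (U : Finset α), U.card = n → ∀ C : Finset (Finset α),
    GoodOn U C → ∃ H : Finset (Finset α), HierOn U H ∧
      C = insert U ((H.filter fun A => 2 ≤ A.card).biUnion fun A => genF H A) := by
  intro n
  induction n using Nat.strong_induction_on with
  | _ n IH =>
    intro U hUcard C hG
    classical
    obtain ⟨hsub, hne, hUC, hsing, hsat, hamp⟩ := hG
    have hUne : U.Nonempty := hne U hUC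
    by_cases h2 : 2 ≤ U.card
    · -- main case
      obtain ⟨parts, hpC, hpne, hpU, hpdisj, hcover, hpcard, p5, punion, p6⟩ := TLL
        ⟨hsub, hne, hUC, hsing, hsat, hamp⟩ h2
      have hPneU : ∀ P ∈ parts, P ≠ U := by
        intro P hP hPU
        obtain ⟨a, ha, b, hb, hab⟩ := Finset.one_lt_card.1 hpcard
        have hex : ∃ P' ∈ parts, P' ≠ P := by
          rcases eq_or_ne P a with rfl | hPa
          · exact ⟨b, hb, fun h => hab h.symm⟩
          · exact ⟨a, ha, fun h => hPa h.symm⟩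
        obtain ⟨P', hP', hP'P⟩ := hex
        obtain ⟨x, hx⟩ := hpne P' hP'
        have hxP : x ∈ P := hPU ▸ hpU P' hP' hx
        exact mem_empty_absurd (Finset.mem_inter.2 ⟨hx, hxP⟩) (hpdisj P' hP' P hP hP'P)
      have hPcardlt : ∀ P ∈ parts, P.card < n := by
        intro P hP
        rw [← hUcard]
        exact Finset.card_lt_card (Finset.ssubset_iff_subset_ne.2 ⟨hpU P hP, hPneU P hP⟩)
      have key : ∀ P : {x // x ∈ parts}, ∃ Hp : Finset (Finset α), HierOn P.1 Hp ∧
          C.filter (· ⊆ P.1) = insert P.1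
            ((Hp.filter fun A => 2 ≤ A.card).biUnion fun A => genF Hp A) := by
        rintro ⟨P, hP⟩
        apply IH P.card (hPcardlt P hP) P rfl
        refine ⟨?_, ?_, ?_, ?_, ?_, ?_⟩
        · exact fun A hA => (Finset.mem_filter.1 hA).2
        · exact fun A hA => hne A (Finset.mem_filter.1 hA).1
        · exact Finset.mem_filter.2 ⟨hpC P hP, Finset.Subset.rfl⟩
        · intro x hx
          exact Finset.mem_filter.2 ⟨hsing x (hpU P hP hx), Finset.singleton_subset_iff.2 hx⟩
        · intro A hA B hB hc
          have hA' := Finset.mem_filter.1 hA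
          have hB' := Finset.mem_filter.1 hB
          obtain ⟨k1, k2, k3, k4, k5⟩ := hsat A hA'.1 B hB'.1 hc
          refine ⟨Finset.mem_filter.2 ⟨k1, Finset.inter_subset_left.trans hA'.2⟩,
            Finset.mem_filter.2 ⟨k2, Finset.union_subset hA'.2 hB'.2⟩,
            Finset.mem_filter.2 ⟨k3, Finset.sdiff_subset.trans hA'.2⟩,
            Finset.mem_filter.2 ⟨k4, Finset.sdiff_subset.trans hB'.2⟩,
            Finset.mem_filter.2 ⟨k5, Finset.sdiff_subset.trans
              (Finset.union_subset hA'.2 hB'.2)⟩⟩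
        · intro C₁ h₁ C₂ h₂ hss harc
          have h₁' := Finset.mem_filter.1 h₁
          have h₂' := Finset.mem_filter.1 h₂
          refine Finset.mem_filter.2 ⟨hamp C₁ h₁'.1 C₂ h₂'.1 hss ?_,
            Finset.sdiff_subset.trans h₁'.2⟩
          intro B hB hcon
          exact harc B (Finset.mem_filter.2 ⟨hB, hcon.2.subset.trans h₁'.2⟩) hcon
      choose Hf hHf hCf using key
      set Hbig : Finset (Finset α) := insert U (parts.attach.biUnion fun P => Hf P)
        with hHbig
      have hHmem : ∀ B, B ∈ Hbig ↔ B = U ∨ ∃ P : {x // x ∈ parts}, B ∈ Hf P := by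
        intro B
        simp [hHbig, Finset.mem_insert, Finset.mem_biUnion, Finset.mem_attach]
      have hHfsubHbig : ∀ P : {x // x ∈ parts}, Hf P ⊆ Hbig := by
        intro P B hB
        exact (hHmem B).2 (Or.inr ⟨P, hB⟩)
      have hfsub : ∀ P : {x // x ∈ parts}, ∀ A ∈ Hf P, A ⊆ P.1 := fun P => (hHf P).1
      have hfne : ∀ P : {x // x ∈ parts}, ∀ A ∈ Hf P, A.Nonempty := fun P => (hHf P).2.1
      have hftop : ∀ P : {x // x ∈ parts}, P.1 ∈ Hf P := fun P => (hHf P).2.2.1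
      have hfsing : ∀ P : {x // x ∈ parts}, ∀ x ∈ P.1, {x} ∈ Hf P :=
        fun P => (hHf P).2.2.2.1
      have hfcomp : ∀ P : {x // x ∈ parts}, ∀ A ∈ Hf P, ∀ B ∈ Hf P, Compatible A B :=
        fun P => (hHf P).2.2.2.2
      have hHsub : ∀ B ∈ Hbig, B ⊆ U := by
        intro B hB
        rcases (hHmem B).1 hB with rfl | ⟨P, hBP⟩
        · exact Finset.Subset.rfl
        · exact (hfsub P B hBP).trans (hpU P.1 P.2)
      have hHne' : ∀ B ∈ Hbig, B.Nonempty := by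
        intro B hB
        rcases (hHmem B).1 hB with rfl | ⟨P, hBP⟩
        · exact hUne
        · exact hfne P B hBP
      have hUH : U ∈ Hbig := (hHmem U).2 (Or.inl rfl)
      have hHsing : ∀ x ∈ U, {x} ∈ Hbig := by
        intro x hx
        rw [← hcover] at hx
        obtain ⟨P, hP, hxP⟩ := mem_sup_id.1 hx
        exact hHfsubHbig ⟨P, hP⟩ (hfsing ⟨P, hP⟩ x hxP)
      have hHcomp : ∀ A ∈ Hbig, ∀ B ∈ Hbig, Compatible A B := by
        intro A hA B hB
        rcases (hHmem A).1 hA with rfl | ⟨P, hAP⟩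
        · exact compat_of_subset' (hHsub B hB)
        · rcases (hHmem B).1 hB with rfl | ⟨P', hBP'⟩
          · exact compat_of_subset (hHsub A (hHfsubHbig P hAP))
          · rcases eq_or_ne P P' with rfl | hPP'
            · exact hfcomp P A hAP B hBP'
            · apply compat_of_disjoint
              have hd : P.1 ∩ P'.1 = ∅ := hpdisj P.1 P.2 P'.1 P'.2
                (fun h => hPP' (Subtype.ext h))
              rw [← Finset.not_nonempty_iff_eq_empty]
              rintro ⟨x, hx⟩
              rw [Finset.mem_inter] at hx
              exact mem_empty_absurd (Finset.mem_inter.2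
                ⟨hfsub P A hAP hx.1, hfsub P' B hBP' hx.2⟩) hd
      have hPneqU : ∀ P : {x // x ∈ parts}, (P : Finset α) ≠ U := fun P => hPneU P.1 P.2
      -- MaxBelowF Hbig U = parts
      have hMaxU : MaxBelowF Hbig U = parts := by
        ext B
        rw [mem_maxBelow_iff]
        constructor
        · rintro ⟨hBH, hBU, hBneU, hmax⟩
          rcases (hHmem B).1 hBH with rfl | ⟨P, hBP⟩
          · exact absurd rfl hBneU
          · have := hmax P.1 (hHfsubHbig P (hftop P)) (hpU P.1 P.2) (hPneqU P)
              (hfsub P B hBP)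
            rw [this]; exact P.2
        · intro hB
          refine ⟨hHfsubHbig ⟨B, hB⟩ (hftop ⟨B, hB⟩), hpU B hB, hPneU B hB, ?_⟩
          intro B' hB' hB'U hB'neU hBB'
          rcases (hHmem B').1 hB' with rfl | ⟨P', hB'P⟩
          · exact absurd rfl hB'neU
          · have hBP' : B = P'.1 := by
              by_contra hne'
              obtain ⟨x, hx⟩ := hpne B hB
              have hxP' : x ∈ P'.1 := hfsub P' B' hB'P (hBB' hx)
              exact mem_empty_absurd (Finset.mem_inter.2 ⟨hx, hxP'⟩)
                (hpdisj B hB P'.1 P'.2 (fun h => hne' h))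
            exact Finset.Subset.antisymm hBB' (hBP' ▸ hfsub P' B' hB'P)
      -- MaxBelowF of members of Hf P is computed within Hf P
      have hMaxA : ∀ P : {x // x ∈ parts}, ∀ A ∈ Hf P,
          MaxBelowF Hbig A = MaxBelowF (Hf P) A := by
        intro P A hA
        have hAP : A ⊆ P.1 := hfsub P A hA
        have hUnotle : ¬U ⊆ A := by
          intro h
          exact hPneqU P (Finset.Subset.antisymm (hpU P.1 P.2) (h.trans hAP))
        have hmemsub : ∀ B ∈ Hbig, B ⊆ A → B ∈ Hf P := by
          intro B hB hBA
          rcases (hHmem B).1 hB with rfl | ⟨P', hBP'⟩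
          · exact absurd hBA hUnotle
          · have hPP' : P' = P := by
              apply Subtype.ext
              by_contra hne'
              obtain ⟨x, hx⟩ := hfne P' B hBP'
              exact mem_empty_absurd (Finset.mem_inter.2
                ⟨hfsub P' B hBP' hx, hBA.trans hAP hx⟩)
                (hpdisj P'.1 P'.2 P.1 P.2 hne')
            exact hPP' ▸ hBP'
        ext B
        rw [mem_maxBelow_iff, mem_maxBelow_iff]
        constructor
        · rintro ⟨k1, k2, k3, k4⟩
          exact ⟨hmemsub B k1 k2, k2, k3,
            fun B' hB' a b c => k4 B' (hHfsubHbig P hB') a b c⟩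
        · rintro ⟨k1, k2, k3, k4⟩
          refine ⟨hHfsubHbig P k1, k2, k3, ?_⟩
          intro B' hB' hB'A hB'ne hBB'
          exact k4 B' (hmemsub B' hB' hB'A) hB'A hB'ne hBB'
      have hgenA : ∀ P : {x // x ∈ parts}, ∀ A ∈ Hf P, genF Hbig A = genF (Hf P) A := by
        intro P A hA
        unfold genF
        rw [hMaxA P A hA]
      have hPgenU : ∀ P ∈ parts, P ∈ genF Hbig U := by
        intro P hP
        apply mem_genF_iff.2
        refine ⟨{P}, ?_, Finset.singleton_nonempty P, ?_, by simp⟩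
        · rw [hMaxU]; exact Finset.singleton_subset_iff.2 hP
        · rw [hMaxU]
          intro h
          rw [← h] at hpcard
          simp at hpcard
      refine ⟨Hbig, ⟨hHsub, hHne', hUH, hHsing, hHcomp⟩, ?_⟩
      apply Finset.Subset.antisymm
      · -- C ⊆ RHS
        intro A hA
        rcases eq_or_ne A U with rfl | hAU
        · exact Finset.mem_insert_self _ _
        · rcases p6 A hA hAU with ⟨P, hP, hAP⟩ | ⟨T, hT, hTne, hTneq, hAT⟩
          · have hAfil : A ∈ C.filter (· ⊆ P) := Finset.mem_filter.2 ⟨hA, hAP⟩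
            rw [hCf ⟨P, hP⟩] at hAfil
            rcases Finset.mem_insert.1 hAfil with rfl | hAbi
            · -- A = P : use genF Hbig U
              apply Finset.mem_insert_of_mem
              apply Finset.mem_biUnion.2
              exact ⟨U, Finset.mem_filter.2 ⟨hUH, h2⟩, hPgenU A hP⟩
            · obtain ⟨A₀, hA₀, hAgen⟩ := Finset.mem_biUnion.1 hAbi
              have hA₀' := Finset.mem_filter.1 hA₀
              apply Finset.mem_insert_of_mem
              apply Finset.mem_biUnion.2
              refine ⟨A₀, Finset.mem_filter.2 ⟨hHfsubHbig ⟨P, hP⟩ hA₀'.1, hA₀'.2⟩, ?_⟩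
              rw [hgenA ⟨P, hP⟩ A₀ hA₀'.1]
              exact hAgen
          · apply Finset.mem_insert_of_mem
            apply Finset.mem_biUnion.2
            refine ⟨U, Finset.mem_filter.2 ⟨hUH, h2⟩, ?_⟩
            apply mem_genF_iff.2
            exact ⟨T, hMaxU ▸ hT, hTne, hMaxU ▸ hTneq, hAT⟩
      · -- RHS ⊆ C
        intro A hA
        rcases Finset.mem_insert.1 hA with rfl | hAbi
        · exact hUC
        · obtain ⟨A₀, hA₀, hAgen⟩ := Finset.mem_biUnion.1 hAbi
          have hA₀' := Finset.mem_filter.1 hA₀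
          rcases (hHmem A₀).1 hA₀'.1 with rfl | ⟨P, hA₀P⟩
          · obtain ⟨T, hT, hTne, hTneq, rfl⟩ := mem_genF_iff.1 hAgen
            rw [hMaxU] at hT
            exact punion T hT hTne
          · rw [hgenA P A₀ hA₀P] at hAgen
            have : A ∈ C.filter (· ⊆ P.1) := by
              rw [hCf P]
              exact Finset.mem_insert_of_mem (Finset.mem_biUnion.2
                ⟨A₀, Finset.mem_filter.2 ⟨hA₀P, hA₀'.2⟩, hAgen⟩)
            exact (Finset.mem_filter.1 this).1
    · -- degenerate case |U| = 1
      have hU1 : U.card = 1 := by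
        have := Finset.card_pos.2 hUne
        omega
      have hCU : C = {U} := by
        ext A
        rw [Finset.mem_singleton]
        constructor
        · intro hA
          apply Finset.eq_of_subset_of_card_le (hsub A hA)
          have := Finset.card_pos.2 (hne A hA)
          omega
        · rintro rfl; exact hUC
      refine ⟨{U}, ⟨?_, ?_, ?_, ?_, ?_⟩, ?_⟩
      · intro A hA; rw [Finset.mem_singleton] at hA; exact hA ▸ Finset.Subset.rfl
      · intro A hA; rw [Finset.mem_singleton] at hA; exact hA ▸ hUne
      · exact Finset.mem_singleton_self U
      · intro x hx
        rw [Finset.mem_singleton]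
        apply Finset.eq_of_subset_of_card_le (Finset.singleton_subset_iff.2 hx)
        simp [hU1]
      · intro A hA B hB
        rw [Finset.mem_singleton] at hA hB
        rw [hA, hB]
        exact Or.inr (Or.inl (Finset.inter_self U))
      · rw [hCU]
        have : ({U} : Finset (Finset α)).filter (fun A => 2 ≤ A.card) = ∅ := by
          rw [Finset.filter_singleton]
          simp [h2]
        rw [this]
        simp
end MainThm
section SL
variable {α : Type*} [DecidableEq α] {U : Finset α} {H C : Finset (Finset α)}

lemma hier_parts (hH : HierOn U H) {A : Finset α} (hA : A ∈ H) (h2 : 2 ≤ A.card) :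
    (∀ P ∈ MaxBelowF H A, P.Nonempty) ∧
    (∀ P ∈ MaxBelowF H A, ∀ P' ∈ MaxBelowF H A, P ≠ P' → P ∩ P' = ∅) ∧
    (MaxBelowF H A).sup id = A ∧ 2 ≤ (MaxBelowF H A).card :=
  ⟨fun P hP => hH.2.1 P (mem_maxBelow_iff.1 hP).1,
   maxBelow_disj hH.2.2.2.2,
   maxBelow_sup hA h2 (fun x hx => hH.2.2.2.1 x (hH.1 A hA hx)),
   maxBelow_card2 hA h2 (fun x hx => hH.2.2.2.1 x (hH.1 A hA hx))⟩

lemma SL_gen_ssub (hH : HierOn U H) {A : Finset α} (hA : A ∈ H) (h2 : 2 ≤ A.card) :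
    ∀ S ∈ genF H A, S.Nonempty ∧ S ⊆ A ∧ S ≠ A := fun S hS =>
  genF_props hH.2.1 hH.2.2.2.2 hA h2 (fun x hx => hH.2.2.2.1 x (hH.1 A hA hx)) hS

lemma SL_genC
    (hCeq : C = insert U ((H.filter fun A => 2 ≤ A.card).biUnion fun A => genF H A))
    {A : Finset α} (hA : A ∈ H) (h2 : 2 ≤ A.card) : genF H A ⊆ C := by
  intro S hS
  rw [hCeq]
  exact Finset.mem_insert_of_mem
    (Finset.mem_biUnion.2 ⟨A, Finset.mem_filter.2 ⟨hA, h2⟩, hS⟩)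

lemma SL_mem
    (hCeq : C = insert U ((H.filter fun A => 2 ≤ A.card).biUnion fun A => genF H A)) :
    ∀ S ∈ C, S = U ∨ ∃ A ∈ H, 2 ≤ A.card ∧ S ∈ genF H A := by
  intro S hS
  rw [hCeq] at hS
  rcases Finset.mem_insert.1 hS with rfl | h
  · exact Or.inl rfl
  · obtain ⟨A, hA, hgen⟩ := Finset.mem_biUnion.1 h
    have := Finset.mem_filter.1 hA
    exact Or.inr ⟨A, this.1, this.2, hgen⟩

lemma SL_HsubC (hH : HierOn U H)
    (hCeq : C = insert U ((H.filter fun A => 2 ≤ A.card).biUnion fun A => genF H A)) :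
    H ⊆ C := by
  classical
  intro B hB
  rcases eq_or_ne B U with rfl | hBU
  · rw [hCeq]; exact Finset.mem_insert_self _ _
  · set F := H.filter (fun A => B ⊆ A ∧ B ≠ A) with hF
    have hFne : F.Nonempty := ⟨U, by
      rw [hF, Finset.mem_filter]
      exact ⟨hH.2.2.1, hH.1 B hB, hBU⟩⟩
    obtain ⟨A, hAF, hmin⟩ : ∃ A ∈ F, ∀ x ∈ F, ¬ x < A := by
      obtain ⟨A, hA⟩ := F.exists_minimal hFne
      exact ⟨A, hA.1, fun x hx hlt => lt_irrefl A (lt_of_le_of_lt (hA.2 hx hlt.le) hlt)⟩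
    rw [hF, Finset.mem_filter] at hAF
    obtain ⟨hAH, hBA, hBneA⟩ := hAF
    have hBmax : B ∈ MaxBelowF H A := by
      rw [mem_maxBelow_iff]
      refine ⟨hB, hBA, hBneA, ?_⟩
      intro B' hB' hB'A hB'ne hBB'
      by_contra hcon
      exact hmin B' (by rw [hF, Finset.mem_filter]; exact ⟨hB', hBB', fun h => hcon h⟩)
        (Finset.ssubset_iff_subset_ne.2 ⟨hB'A, hB'ne⟩)
    have h2A : 2 ≤ A.card :=
      two_le_card_of_ssub (hH.2.1 B hB) (Finset.ssubset_iff_subset_ne.2 ⟨hBA, hBneA⟩)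
    have hcard2 := (hier_parts hH hAH h2A).2.2.2
    apply SL_genC hCeq hAH h2A
    apply mem_genF_iff.2
    refine ⟨{B}, Finset.singleton_subset_iff.2 hBmax, Finset.singleton_nonempty B, ?_, by simp⟩
    intro h
    rw [← h] at hcard2
    simp at hcard2

lemma SL_compat (hH : HierOn U H)
    (hCeq : C = insert U ((H.filter fun A => 2 ≤ A.card).biUnion fun A => genF H A)) :
    ∀ B ∈ H, ∀ S ∈ C, Compatible B S := by
  intro B hB S hS
  rcases SL_mem hCeq S hS with rfl | ⟨A, hA, h2A, hSgen⟩
  · exact compat_of_subset (hH.1 B hB)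
  · obtain ⟨hPne, hPdisj, hPsup, hPcard⟩ := hier_parts hH hA h2A
    have hSA : S ⊆ A := (SL_gen_ssub hH hA h2A S hSgen).2.1
    obtain ⟨M, hM, hMne, hMneq, rfl⟩ := mem_genF_iff.1 hSgen
    rcases hH.2.2.2.2 B hB A hA with hd | hba | hab
    · -- B ∩ A = ∅
      apply compat_of_disjoint
      rw [← Finset.not_nonempty_iff_eq_empty]
      rintro ⟨x, hx⟩
      rw [Finset.mem_inter] at hx
      exact mem_empty_absurd (Finset.mem_inter.2 ⟨hx.1, hSA hx.2⟩) hd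
    · -- B ⊆ A
      have hBA : B ⊆ A := Finset.inter_eq_left.1 hba
      rcases eq_or_ne B A with rfl | hne'
      · exact compat_of_subset' hSA
      · obtain ⟨P, hP, hBP⟩ := exists_maxBelow hB hBA hne'
        by_cases hPM : P ∈ M
        · exact compat_of_subset (hBP.trans (subset_sup_id hPM))
        · apply compat_of_disjoint
          have hd := sup_ne_of_proper hPne hPdisj hM hMneq hP hPM
          rw [← Finset.not_nonempty_iff_eq_empty]
          rintro ⟨x, hx⟩
          rw [Finset.mem_inter] at hx
          exact mem_empty_absurd (Finset.mem_inter.2 ⟨hBP hx.1, hx.2⟩) hd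
    · -- A ⊆ B
      exact compat_of_subset' (hSA.trans (Finset.inter_eq_right.1 hab))

lemma SL_adj (hH : HierOn U H)
    (hCeq : C = insert U ((H.filter fun A => 2 ≤ A.card).biUnion fun A => genF H A)) :
    ∀ A' : Finset α, A' ⊆ U → A'.Nonempty → (∀ S ∈ C, Compatible A' S) → A' ∈ H := by
  classical
  intro A' hA'U hA'ne hcomp
  set F := H.filter (fun B => A' ⊆ B) with hF
  have hFne : F.Nonempty := ⟨U, by rw [hF, Finset.mem_filter]; exact ⟨hH.2.2.1, hA'U⟩⟩
  obtain ⟨B, hBF, hmin⟩ := F.exists_min_image Finset.card hFne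
  rw [hF, Finset.mem_filter] at hBF
  obtain ⟨hBH, hA'B⟩ := hBF
  rcases eq_or_ne A' B with rfl | hne'
  · exact hBH
  · exfalso
    have hss : A' ⊂ B := Finset.ssubset_iff_subset_ne.2 ⟨hA'B, hne'⟩
    have h2B : 2 ≤ B.card := two_le_card_of_ssub hA'ne hss
    obtain ⟨hPne, hPdisj, hPsup, hPcard⟩ := hier_parts hH hBH h2B
    have hnotin : ∀ P ∈ MaxBelowF H B, ¬A' ⊆ P := by
      intro P hP hsubP
      have hPH := (mem_maxBelow_iff.1 hP).1
      have hPB : P ⊂ B := Finset.ssubset_iff_subset_ne.2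
        ⟨(mem_maxBelow_iff.1 hP).2.1, (mem_maxBelow_iff.1 hP).2.2.1⟩
      have := hmin P (by rw [hF, Finset.mem_filter]; exact ⟨hPH, hsubP⟩)
      have := Finset.card_lt_card hPB
      omega
    have hcases : ∀ P ∈ MaxBelowF H B, P ⊆ A' ∨ A' ∩ P = ∅ := by
      intro P hP
      have hPC : P ∈ C := SL_HsubC hH hCeq (mem_maxBelow_iff.1 hP).1
      rcases hcomp P hPC with h | h | h
      · exact Or.inr h
      · exact absurd (Finset.inter_eq_left.1 h) (hnotin P hP)
      · exact Or.inl (Finset.inter_eq_right.1 h)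
    set M := (MaxBelowF H B).filter (fun P => P ⊆ A') with hMdef
    have hMsub : M ⊆ MaxBelowF H B := Finset.filter_subset _ _
    have hA'sup : A' = M.sup id := by
      apply Finset.Subset.antisymm
      · intro x hx
        have hxB : x ∈ B := hA'B hx
        rw [← hPsup] at hxB
        obtain ⟨P, hP, hxP⟩ := mem_sup_id.1 hxB
        rcases hcases P hP with h | h
        · exact mem_sup_id.2 ⟨P, by rw [hMdef, Finset.mem_filter]; exact ⟨hP, h⟩, hxP⟩
        · exact absurd (Finset.mem_inter.2 ⟨hx, hxP⟩) (fun hm => mem_empty_absurd hm h)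
      · exact sup_subset_of_forall fun P hP => (Finset.mem_filter.1 hP).2
    have hMne : M.Nonempty := by
      by_contra h
      rw [Finset.not_nonempty_iff_eq_empty] at h
      rw [h, Finset.sup_empty] at hA'sup
      exact hA'ne.ne_empty hA'sup
    have hMneq : M ≠ MaxBelowF H B := by
      intro h
      rw [h, hPsup] at hA'sup
      exact hne' hA'sup
    have hMcard : 2 ≤ M.card := by
      by_contra h
      push_neg at h
      have h1 : M.card = 1 := by
        have := Finset.card_pos.2 hMne
        omega
      obtain ⟨P₁, hP₁⟩ := Finset.card_eq_one.1 h1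
      rw [hP₁, Finset.sup_singleton] at hA'sup
      exact hnotin P₁ (hMsub (hP₁ ▸ Finset.mem_singleton_self P₁))
        (hA'sup ▸ Finset.Subset.rfl)
    obtain ⟨P₁, hP₁M, P₂, hP₂M, hP₁P₂⟩ := Finset.one_lt_card.1 hMcard
    obtain ⟨P₃, hP₃, hP₃M⟩ := Finset.exists_of_ssubset
      (Finset.ssubset_iff_subset_ne.2 ⟨hMsub, hMneq⟩)
    have hP₁Max := hMsub hP₁M
    have hP₂Max := hMsub hP₂M
    have hP₁A' : P₁ ⊆ A' := (Finset.mem_filter.1 hP₁M).2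
    have hP₂A' : P₂ ⊆ A' := (Finset.mem_filter.1 hP₂M).2
    have hP₃A' : A' ∩ P₃ = ∅ := by
      rcases hcases P₃ hP₃ with h | h
      · exact absurd (show P₃ ∈ M from by rw [hMdef]; exact Finset.mem_filter.2 ⟨hP₃, h⟩) hP₃M
      · exact h
    have hP₁P₃ : P₁ ≠ P₃ := fun h => hP₃M (h ▸ hP₁M)
    have hP₂P₃ : P₂ ≠ P₃ := fun h => hP₃M (h ▸ hP₂M)
    set S : Finset α := ({P₁, P₃} : Finset (Finset α)).sup id with hSdef
    have hSC : S ∈ C := by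
      apply SL_genC hCeq hBH h2B
      apply mem_genF_iff.2
      refine ⟨{P₁, P₃}, ?_, ⟨P₁, by simp⟩, ?_, rfl⟩
      · intro P hP
        rcases Finset.mem_insert.1 hP with rfl | hP'
        · exact hP₁Max
        · rw [Finset.mem_singleton] at hP'; exact hP' ▸ hP₃
      · intro h
        have : P₂ ∈ ({P₁, P₃} : Finset (Finset α)) := h ▸ hP₂Max
        rcases Finset.mem_insert.1 this with h' | h'
        · exact hP₁P₂ h'.symm
        · rw [Finset.mem_singleton] at h'; exact hP₂P₃ h'
    have hSval : S = P₁ ∪ P₃ := by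
      rw [hSdef, Finset.sup_insert, Finset.sup_singleton]; rfl
    have hinter : A' ∩ S = P₁ := by
      rw [hSval, Finset.inter_union_distrib_left, hP₃A', Finset.union_empty]
      exact Finset.inter_eq_right.2 hP₁A'
    have hP₁ne : P₁.Nonempty := hPne P₁ hP₁Max
    rcases hcomp S hSC with h | h | h
    · rw [hinter] at h
      exact hP₁ne.ne_empty h
    · rw [hinter] at h
      exact hnotin P₁ hP₁Max (h ▸ Finset.Subset.rfl)
    · rw [hinter, hSval] at h
      have hP₃P₁ : P₃ ⊆ P₁ := by rw [h]; exact Finset.subset_union_right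
      obtain ⟨x, hx⟩ := hPne P₃ hP₃
      exact mem_empty_absurd (Finset.mem_inter.2 ⟨hP₃P₁ hx, hx⟩)
        (hPdisj P₁ hP₁Max P₃ hP₃ hP₁P₃)

lemma SL_disj (hH : HierOn U H) :
    ∀ A ∈ H, ∀ A' ∈ H, 2 ≤ A.card → 2 ≤ A'.card → A ≠ A' →
      Disjoint (genF H A) (genF H A') := by
  have key : ∀ A ∈ H, ∀ A' ∈ H, 2 ≤ A.card → 2 ≤ A'.card → A ⊆ A' → A ≠ A' →
      ∀ S, S ∈ genF H A → S ∈ genF H A' → False := by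
    intro A hA A' hA' h2 h2' hAA' hne' S hS hS'
    obtain ⟨hPne, hPdisj, hPsup, hPcard⟩ := hier_parts hH hA' h2'
    obtain ⟨hSne, hSA, hSneA⟩ := SL_gen_ssub hH hA h2 S hS
    obtain ⟨P, hP, hAP⟩ := exists_maxBelow hA hAA' hne'
    obtain ⟨M', hM', hM'ne, hM'neq, rfl⟩ := mem_genF_iff.1 hS'
    have hallP : ∀ P' ∈ M', P' = P := by
      intro P' hP'
      by_contra hcon
      obtain ⟨x, hx⟩ := hPne P' (hM' hP')
      have hxS : x ∈ M'.sup id := subset_sup_id hP' hx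
      have hxP : x ∈ P := hAP (hSA hxS)
      exact mem_empty_absurd (Finset.mem_inter.2 ⟨hx, hxP⟩)
        (hPdisj P' (hM' hP') P hP hcon)
    obtain ⟨P₀, hP₀⟩ := hM'ne
    have hMP : M' = {P} := by
      apply Finset.Subset.antisymm
      · intro P' hP'
        rw [Finset.mem_singleton]
        exact hallP P' hP'
      · intro P' hP'
        rw [Finset.mem_singleton] at hP'
        rw [hP', ← hallP P₀ hP₀]
        exact hP₀
    rw [hMP, Finset.sup_singleton] at hSA hSneA
    exact hSneA (Finset.Subset.antisymm hSA hAP)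
  intro A hA A' hA' h2 h2' hne'
  rw [Finset.disjoint_left]
  intro S hS hS'
  rcases hH.2.2.2.2 A hA A' hA' with hd | hsub | hsub'
  · obtain ⟨hSne, hSA, _⟩ := SL_gen_ssub hH hA h2 S hS
    obtain ⟨_, hSA', _⟩ := SL_gen_ssub hH hA' h2' S hS'
    obtain ⟨x, hx⟩ := hSne
    exact mem_empty_absurd (Finset.mem_inter.2 ⟨hSA hx, hSA' hx⟩) hd
  · exact key A hA A' hA' h2 h2' (Finset.inter_eq_left.1 hsub) hne' S hS hS'
  · exact key A' hA' A hA h2' h2 (Finset.inter_eq_right.1 hsub') (fun h => hne' h.symm) S hS' hS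

end SL
section SL2
variable {α : Type*} [DecidableEq α] {U : Finset α} {H C : Finset (Finset α)}

lemma SL_CsubU (hH : HierOn U H)
    (hCeq : C = insert U ((H.filter fun A => 2 ≤ A.card).biUnion fun A => genF H A)) :
    ∀ S ∈ C, S ⊆ U := by
  intro S hS
  rcases SL_mem hCeq S hS with rfl | ⟨A₀, hA₀, h2, hgen⟩
  · exact Finset.Subset.rfl
  · exact ((SL_gen_ssub hH hA₀ h2 S hgen).2.1).trans (hH.1 A₀ hA₀)

lemma SL_Cne (hH : HierOn U H)
    (hCeq : C = insert U ((H.filter fun A => 2 ≤ A.card).biUnion fun A => genF H A)) :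
    ∀ S ∈ C, S.Nonempty := by
  intro S hS
  rcases SL_mem hCeq S hS with rfl | ⟨A₀, hA₀, h2, hgen⟩
  · exact hH.2.1 _ hH.2.2.1
  · exact (SL_gen_ssub hH hA₀ h2 S hgen).1

lemma SL_UnotinGen (hH : HierOn U H) :
    ∀ A ∈ H, 2 ≤ A.card → U ∉ genF H A := by
  intro A hA h2 hmem
  obtain ⟨_, hsubA, hneA⟩ := SL_gen_ssub hH hA h2 U hmem
  exact hneA (Finset.Subset.antisymm hsubA (hH.1 A hA))

lemma SL_cross (hH : HierOn U H) :
    ∀ A ∈ H, ∀ A' ∈ H, 2 ≤ A.card → 2 ≤ A'.card → A ≠ A' →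
      ∀ S ∈ genF H A, ∀ S' ∈ genF H A', Compatible S S' := by
  have key : ∀ A ∈ H, ∀ A' ∈ H, 2 ≤ A.card → 2 ≤ A'.card → A ⊆ A' → A ≠ A' →
      ∀ S ∈ genF H A, ∀ S' ∈ genF H A', Compatible S S' := by
    intro A hA A' hA' h2 h2' hsub hne' S hS S' hS'
    obtain ⟨hPne, hPdisj, hPsup, hPcard⟩ := hier_parts hH hA' h2'
    have hSA : S ⊆ A := (SL_gen_ssub hH hA h2 S hS).2.1
    obtain ⟨P, hP, hAP⟩ := exists_maxBelow hA hsub hne'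
    obtain ⟨M', hM', hM'ne, hM'neq, rfl⟩ := mem_genF_iff.1 hS'
    by_cases hPM : P ∈ M'
    · exact compat_of_subset ((hSA.trans hAP).trans (subset_sup_id hPM))
    · apply compat_of_disjoint
      have hd := sup_ne_of_proper hPne hPdisj hM' hM'neq hP hPM
      rw [← Finset.not_nonempty_iff_eq_empty]
      rintro ⟨x, hx⟩
      rw [Finset.mem_inter] at hx
      exact mem_empty_absurd (Finset.mem_inter.2 ⟨hAP (hSA hx.1), hx.2⟩) hd
  intro A hA A' hA' h2 h2' hne' S hS S' hS'
  rcases hH.2.2.2.2 A hA A' hA' with hd | hsub | hsub'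
  · apply compat_of_disjoint
    have hSA := (SL_gen_ssub hH hA h2 S hS).2.1
    have hSA' := (SL_gen_ssub hH hA' h2' S' hS').2.1
    rw [← Finset.not_nonempty_iff_eq_empty]
    rintro ⟨x, hx⟩
    rw [Finset.mem_inter] at hx
    exact mem_empty_absurd (Finset.mem_inter.2 ⟨hSA hx.1, hSA' hx.2⟩) hd
  · exact key A hA A' hA' h2 h2' (Finset.inter_eq_left.1 hsub) hne' S hS S' hS'
  · exact compat_comm.1 (key A' hA' A hA h2' h2 (Finset.inter_eq_right.1 hsub')
      (fun h => hne' h.symm) S' hS' S hS)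

lemma SL_satpw (hH : HierOn U H)
    (hCeq : C = insert U ((H.filter fun A => 2 ≤ A.card).biUnion fun A => genF H A)) :
    IsSatPWF C := by
  intro A hA B hB hc
  rcases SL_mem hCeq A hA with rfl | ⟨A₀, hA₀, h2A, hAg⟩
  · exact absurd (compat_of_subset' (SL_CsubU hH hCeq B hB)) hc
  rcases SL_mem hCeq B hB with rfl | ⟨B₀, hB₀, h2B, hBg⟩
  · exact absurd (compat_of_subset (SL_CsubU hH hCeq A hA)) hc
  rcases eq_or_ne A₀ B₀ with rfl | hne'
  · -- same block
    obtain ⟨hPne, hPdisj, hPsup, hPcard⟩ := hier_parts hH hA₀ h2A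
    obtain ⟨MA, hMA, hMAne, hMAneq, rfl⟩ := mem_genF_iff.1 hAg
    obtain ⟨MB, hMB, hMBne, hMBneq, rfl⟩ := mem_genF_iff.1 hBg
    rw [not_compat_iff] at hc
    obtain ⟨hi, hnab, hnba⟩ := hc
    have mkmem : ∀ M'' ⊆ MaxBelowF H A₀, (M''.sup id).Nonempty → M'' ≠ MaxBelowF H A₀ →
        M''.sup id ∈ C := by
      intro M'' hsub'' hne'' hneq''
      have hM''ne : M''.Nonempty := by
        by_contra h
        rw [Finset.not_nonempty_iff_eq_empty] at h
        rw [h, Finset.sup_empty] at hne''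
        exact hne''.ne_empty rfl
      exact SL_genC hCeq hA₀ h2A (mem_genF_iff.2 ⟨M'', hsub'', hM''ne, hneq'', rfl⟩)
    have hMABne : (MA ∩ MB).Nonempty := by
      by_contra h
      rw [Finset.not_nonempty_iff_eq_empty] at h
      have := sup_inter_sup hPdisj hMA hMB
      rw [h, Finset.sup_empty] at this
      exact hi.ne_empty this
    have hsub_ne : ∀ M'' ⊆ MA, M'' ≠ MaxBelowF H A₀ := by
      intro M'' h hq
      exact hMAneq (Finset.Subset.antisymm hMA (hq ▸ h))
    have hsub_neB : ∀ M'' ⊆ MB, M'' ≠ MaxBelowF H A₀ := by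
      intro M'' h hq
      exact hMBneq (Finset.Subset.antisymm hMB (hq ▸ h))
    refine ⟨?_, ?_, ?_, ?_, ?_⟩
    · -- intersection
      rw [sup_inter_sup hPdisj hMA hMB]
      exact mkmem _ (Finset.inter_subset_left.trans hMA)
        (by rw [← sup_inter_sup hPdisj hMA hMB]; exact hi)
        (hsub_ne _ Finset.inter_subset_left)
    · -- union
      have hUU : (MA ∪ MB).sup id = MA.sup id ∪ MB.sup id := Finset.sup_union
      rw [← hUU]
      by_cases h : MA ∪ MB = MaxBelowF H A₀
      · rw [h, hPsup]
        exact SL_HsubC hH hCeq hA₀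
      · apply mkmem _ (Finset.union_subset hMA hMB) ?_ h
        rw [hUU]
        obtain ⟨x, hx⟩ := sup_nonempty_of_nonempty hPne hMA hMAne
        exact ⟨x, Finset.mem_union_left _ hx⟩
    · -- A \ B
      rw [sup_sdiff_sup hPdisj hMA hMB]
      refine mkmem _ ((Finset.sdiff_subset).trans hMA) ?_
        (hsub_ne _ Finset.sdiff_subset)
      rw [← sup_sdiff_sup hPdisj hMA hMB]
      exact Finset.sdiff_nonempty.2 hnab
    · -- B \ A
      rw [sup_sdiff_sup hPdisj hMB hMA]
      refine mkmem _ ((Finset.sdiff_subset).trans hMB) ?_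
        (hsub_neB _ Finset.sdiff_subset)
      rw [← sup_sdiff_sup hPdisj hMB hMA]
      exact Finset.sdiff_nonempty.2 hnba
    · -- symmetric difference
      have hUU : (MA ∪ MB).sup id = MA.sup id ∪ MB.sup id := Finset.sup_union
      have hII : (MA ∩ MB).sup id = MA.sup id ∩ MB.sup id :=
        (sup_inter_sup hPdisj hMA hMB).symm
      rw [← hUU, ← hII, sup_sdiff_sup hPdisj (Finset.union_subset hMA hMB)
        (Finset.inter_subset_left.trans hMA)]
      refine mkmem _ ((Finset.sdiff_subset).trans (Finset.union_subset hMA hMB)) ?_ ?_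
      · rw [← sup_sdiff_sup hPdisj (Finset.union_subset hMA hMB)
          (Finset.inter_subset_left.trans hMA), hUU, hII]
        apply Finset.sdiff_nonempty.2
        intro h
        apply hnab
        intro x hx
        exact (Finset.mem_inter.1 (h (Finset.mem_union_left _ hx))).2
      · intro h
        obtain ⟨P, hP⟩ := hMABne
        have hPmem : P ∈ (MA ∪ MB) \ (MA ∩ MB) := by
          rw [h]
          exact hMA (Finset.mem_inter.1 hP).1
        exact (Finset.mem_sdiff.1 hPmem).2 hP
  · exact absurd (SL_cross hH A₀ hA₀ B₀ hB₀ h2A h2B hne' _ hAg _ hBg) hc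

lemma SL_ample (hH : HierOn U H)
    (hCeq : C = insert U ((H.filter fun A => 2 ≤ A.card).biUnion fun A => genF H A)) :
    IsAmpleF C := by
  intro C₁ h₁ C₂ h₂ hss harc
  rcases SL_mem hCeq C₂ h₂ with hC₂U | ⟨B₀, hB₀, h2B, hBg⟩
  · subst hC₂U
    rw [Finset.ssubset_def] at hss
    exact absurd (SL_CsubU hH hCeq C₁ h₁) hss.2
  obtain ⟨hBne, hBdisj, hBsup, hBcard⟩ := hier_parts hH hB₀ h2B
  have hBg' := hBg
  obtain ⟨M₂, hM₂, hM₂ne, hM₂neq, rfl⟩ := mem_genF_iff.1 hBg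
  have hC₂B₀ : M₂.sup id ⊆ B₀ := (SL_gen_ssub hH hB₀ h2B _ hBg').2.1
  have hC₂neB₀ : M₂.sup id ≠ B₀ := (SL_gen_ssub hH hB₀ h2B _ hBg').2.2
  have hC₂ne : (M₂.sup id).Nonempty := (SL_gen_ssub hH hB₀ h2B _ hBg').1
  rcases SL_mem hCeq C₁ h₁ with hC₁U | ⟨A₀, hA₀, h2A, hAg⟩
  · -- C₁ = U
    rw [hC₁U] at hss harc ⊢
    rcases eq_or_ne B₀ U with rfl | hB₀U
    · -- complement of C₂ within U = B₀
      rw [← hBsup, sup_sdiff_sup hBdisj Finset.Subset.rfl hM₂]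
      apply SL_genC hCeq hB₀ h2B
      apply mem_genF_iff.2
      refine ⟨_, Finset.sdiff_subset, ?_, ?_, rfl⟩
      · obtain ⟨P, hP, hPM₂⟩ := Finset.exists_of_ssubset
          (Finset.ssubset_iff_subset_ne.2 ⟨hM₂, hM₂neq⟩)
        exact ⟨P, Finset.mem_sdiff.2 ⟨hP, hPM₂⟩⟩
      · intro h
        obtain ⟨P, hP⟩ := hM₂ne
        have : P ∈ MaxBelowF H B₀ \ M₂ := by rw [h]; exact hM₂ hP
        exact (Finset.mem_sdiff.1 this).2 hP
    · exfalso
      apply harc B₀ (SL_HsubC hH hCeq hB₀)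
      exact ⟨Finset.ssubset_iff_subset_ne.2 ⟨hC₂B₀, hC₂neB₀⟩,
        Finset.ssubset_iff_subset_ne.2 ⟨hH.1 B₀ hB₀, hB₀U⟩⟩
  · -- C₁ ∈ genF H A₀
    obtain ⟨hAne, hAdisj, hAsup, hAcard⟩ := hier_parts hH hA₀ h2A
    obtain ⟨M₁, hM₁, hM₁ne, hM₁neq, rfl⟩ := mem_genF_iff.1 hAg
    have hC₁A₀ : M₁.sup id ⊆ A₀ :=
      sup_subset_of_forall fun P hP => (mem_maxBelow_iff.1 (hM₁ hP)).2.1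
    have core : ∀ M₂' ⊆ M₁, M₂'.Nonempty → M₂'.sup id ≠ M₁.sup id →
        M₁.sup id \ M₂'.sup id ∈ C := by
      intro M₂' hsub' hne'' hneq
      rw [sup_sdiff_sup hAdisj hM₁ (hsub'.trans hM₁)]
      apply SL_genC hCeq hA₀ h2A
      apply mem_genF_iff.2
      refine ⟨_, Finset.sdiff_subset.trans hM₁, ?_, ?_, rfl⟩
      · by_contra h
        rw [Finset.not_nonempty_iff_eq_empty, Finset.sdiff_eq_empty_iff_subset] at h
        exact hneq (by rw [Finset.Subset.antisymm hsub' h])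
      · intro h
        obtain ⟨P, hP⟩ := hne''
        have : P ∈ M₁ \ M₂' := by rw [h]; exact hM₁ (hsub' hP)
        exact (Finset.mem_sdiff.1 this).2 hP
    rcases eq_or_ne B₀ A₀ with rfl | hBA
    · -- same block
      have hsub21 : M₂ ⊆ M₁ := by
        intro P hP
        exact mem_of_subset_sup hAdisj hM₁ (hM₂ hP) (hAne P (hM₂ hP))
          ((subset_sup_id hP).trans hss.subset)
      exact core M₂ hsub21 hM₂ne hss.ne
    · rcases hH.2.2.2.2 B₀ hB₀ A₀ hA₀ with hd | hsubBA | hsubAB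
      · exfalso
        obtain ⟨x, hx⟩ := hC₂ne
        exact mem_empty_absurd (Finset.mem_inter.2
          ⟨hC₂B₀ hx, hC₁A₀ (hss.subset hx)⟩) hd
      · -- B₀ ⊆ A₀
        have hsubB₀A₀ : B₀ ⊆ A₀ := Finset.inter_eq_left.1 hsubBA
        obtain ⟨P, hPmax, hB₀P⟩ := exists_maxBelow hB₀ hsubB₀A₀ hBA
        have hC₂P : M₂.sup id ⊆ P := hC₂B₀.trans hB₀P
        have hPM₁ : P ∈ M₁ := by
          obtain ⟨x, hx⟩ := hC₂ne
          obtain ⟨P'', hP'', hx''⟩ := mem_sup_id.1 (hss.subset hx)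
          have : P = P'' := by
            by_contra hcon
            exact mem_empty_absurd (Finset.mem_inter.2 ⟨hC₂P hx, hx''⟩)
              (hAdisj P hPmax P'' (hM₁ hP'') hcon)
          exact this ▸ hP''
        have hPC₁ : P ⊆ M₁.sup id := subset_sup_id hPM₁
        have hPH : P ∈ H := (mem_maxBelow_iff.1 hPmax).1
        have hPC : P ∈ C := SL_HsubC hH hCeq hPH
        by_cases hPeq2 : P = M₂.sup id
        · have hres := core {P} (Finset.singleton_subset_iff.2 hPM₁)
            (Finset.singleton_nonempty P)
            (by rw [Finset.sup_singleton]; exact hPeq2 ▸ (hPeq2 ▸ hss.ne))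
          rw [Finset.sup_singleton] at hres
          show M₁.sup id \ M₂.sup id ∈ C
          rw [← hPeq2]
          exact hres
        · by_cases hPeq1 : P = M₁.sup id
          · rcases eq_or_ne B₀ P with rfl | hB₀P'
            · -- B₀ = P = C₁ : complement within B₀
              show M₁.sup id \ M₂.sup id ∈ C
              rw [← hPeq1, ← hBsup, sup_sdiff_sup hBdisj Finset.Subset.rfl hM₂]
              apply SL_genC hCeq hB₀ h2B
              apply mem_genF_iff.2
              refine ⟨_, Finset.sdiff_subset, ?_, ?_, rfl⟩
              · obtain ⟨Q, hQ, hQM₂⟩ := Finset.exists_of_ssubset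
                  (Finset.ssubset_iff_subset_ne.2 ⟨hM₂, hM₂neq⟩)
                exact ⟨Q, Finset.mem_sdiff.2 ⟨hQ, hQM₂⟩⟩
              · intro h
                obtain ⟨Q, hQ⟩ := hM₂ne
                have : Q ∈ MaxBelowF H B₀ \ M₂ := by rw [h]; exact hM₂ hQ
                exact (Finset.mem_sdiff.1 this).2 hQ
            · exfalso
              apply harc B₀ (SL_HsubC hH hCeq hB₀)
              refine ⟨Finset.ssubset_iff_subset_ne.2 ⟨hC₂B₀, hC₂neB₀⟩, ?_⟩
              exact Finset.ssubset_iff_subset_ne.2 ⟨hPeq1 ▸ hB₀P, hPeq1 ▸ hB₀P'⟩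
          · exfalso
            apply harc P hPC
            exact ⟨Finset.ssubset_iff_subset_ne.2 ⟨hC₂P, fun h => hPeq2 h.symm⟩,
              Finset.ssubset_iff_subset_ne.2 ⟨hPC₁, hPeq1⟩⟩
      · -- A₀ ⊆ B₀
        exfalso
        have hsubA₀B₀ : A₀ ⊆ B₀ := Finset.inter_eq_right.1 hsubAB
        obtain ⟨P, hPmax, hA₀P⟩ := exists_maxBelow hA₀ hsubA₀B₀ (fun h => hBA h.symm)
        have hallP : ∀ P' ∈ M₂, P' = P := by
          intro P' hP'
          by_contra hcon
          obtain ⟨x, hx⟩ := hBne P' (hM₂ hP')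
          have hxC₂ : x ∈ M₂.sup id := subset_sup_id hP' hx
          have hxP : x ∈ P := hA₀P (hC₁A₀ (hss.subset hxC₂))
          exact mem_empty_absurd (Finset.mem_inter.2 ⟨hx, hxP⟩)
            (hBdisj P' (hM₂ hP') P hPmax hcon)
        obtain ⟨P₀, hP₀⟩ := hM₂ne
        have hPinM₂ : P ∈ M₂ := hallP P₀ hP₀ ▸ hP₀
        have hPC₂ : P ⊆ M₂.sup id := subset_sup_id hPinM₂
        have : P ⊂ P := lt_of_le_of_lt
          (Finset.le_iff_subset.2 hPC₂)
          (lt_of_lt_of_le hss (Finset.le_iff_subset.2 (hC₁A₀.trans hA₀P)))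
        exact ssubset_irrefl P this

end SL2
section Card
variable {α : Type*} [DecidableEq α] {U : Finset α} {H C : Finset (Finset α)}

lemma SL_card (hH : HierOn U H)
    (hCeq : C = insert U ((H.filter fun A => 2 ≤ A.card).biUnion fun A => genF H A)) :
    C.card = 1 + ∑ A ∈ H.filter (fun A => 2 ≤ A.card), (2 ^ (MaxBelowF H A).card - 2) := by
  classical
  rw [hCeq]
  rw [Finset.card_insert_of_notMem]
  swap
  · intro hmem
    obtain ⟨A, hA, hgen⟩ := Finset.mem_biUnion.1 hmem
    have := Finset.mem_filter.1 hA
    exact SL_UnotinGen hH A this.1 this.2 hgen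
  rw [Finset.card_biUnion]
  swap
  · intro x hx y hy hxy
    have hx' := Finset.mem_filter.1 hx
    have hy' := Finset.mem_filter.1 hy
    exact SL_disj hH x hx'.1 y hy'.1 hx'.2 hy'.2 hxy
  rw [add_comm]
  congr 1
  apply Finset.sum_congr rfl
  intro A hA
  have hA' := Finset.mem_filter.1 hA
  obtain ⟨hPne, hPdisj, hPsup, hPcard⟩ := hier_parts hH hA'.1 hA'.2
  unfold genF
  rw [Finset.card_image_of_injOn]
  swap
  · intro M hM M' hM' heq
    simp only [Finset.coe_filter, Set.mem_setOf_eq, Finset.mem_powerset] at hM hM'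
    exact sup_id_injOn hPne hPdisj hM.1 hM'.1 heq
  have hsetEq : (MaxBelowF H A).powerset.filter
      (fun M => M.Nonempty ∧ M ≠ MaxBelowF H A)
      = (MaxBelowF H A).powerset \ {∅, MaxBelowF H A} := by
    ext M
    simp only [Finset.mem_filter, Finset.mem_sdiff, Finset.mem_powerset,
      Finset.mem_insert, Finset.mem_singleton, Finset.nonempty_iff_ne_empty]
    tauto
  rw [hsetEq, Finset.card_sdiff_of_subset]
  · rw [Finset.card_powerset]
    congr 1
    rw [Finset.card_insert_of_notMem, Finset.card_singleton]
    rw [Finset.mem_singleton]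
    intro h
    have : (MaxBelowF H A).card = 0 := by rw [← h]; simp
    omega
  · intro M hM
    rcases Finset.mem_insert.1 hM with rfl | hM'
    · exact Finset.mem_powerset.2 (Finset.empty_subset _)
    · rw [Finset.mem_singleton] at hM'
      exact hM' ▸ Finset.mem_powerset.2 Finset.Subset.rfl

end Card

lemma mem_CtrivF {β : Type*} [Fintype β] [DecidableEq β] {A : Finset β} :
    A ∈ CtrivF β ↔ (∃ x, A = {x}) ∨ A = Finset.univ := by
  unfold CtrivF
  rw [Finset.mem_union, Finset.mem_singleton]
  constructor
  · rintro (h | h)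
    · obtain ⟨x, _, rfl⟩ := Finset.mem_image.1 h
      exact Or.inl ⟨x, rfl⟩
    · exact Or.inr h
  · rintro (⟨x, rfl⟩ | rfl)
    · exact Or.inl (Finset.mem_image.2 ⟨x, Finset.mem_univ x, rfl⟩)
    · exact Or.inr rfl

theorem stmt14 {α : Type*} [Fintype α] [DecidableEq α] (hcard : 2 ≤ Fintype.card α)
    (C : Finset (Finset α)) (hC : IsCSF C) :
    ((IsSatPWF C ∧ IsAmpleF C ∧ CtrivF α ⊆ C) ↔
      ∃ H : Finset (Finset α), IsHierarchyF H ∧ CtrivF α ⊆ H ∧ H = adjF C ∧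
        C = insert Finset.univ
              ((H.filter fun A => 2 ≤ A.card).biUnion fun A => genF H A) ∧
        (∀ A ∈ H, 2 ≤ A.card → Finset.univ ∉ genF H A) ∧
        (∀ A ∈ H, ∀ A' ∈ H, 2 ≤ A.card → 2 ≤ A'.card → A ≠ A' →
          Disjoint (genF H A) (genF H A'))) ∧
    ((IsSatPWF C ∧ IsAmpleF C ∧ CtrivF α ⊆ C) →
      C.card = 1 + ∑ A ∈ (adjF C).filter (fun A => 1 < A.card),
        (2 ^ (MaxBelowF (adjF C) A).card - 2)) := by
  classical
  have hUnivCtriv : (Finset.univ : Finset α) ∈ CtrivF α := mem_CtrivF.2 (Or.inr rfl)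
  have hSingCtriv : ∀ x : α, ({x} : Finset α) ∈ CtrivF α :=
    fun x => mem_CtrivF.2 (Or.inl ⟨x, rfl⟩)
  have forward : (IsSatPWF C ∧ IsAmpleF C ∧ CtrivF α ⊆ C) →
      ∃ Hh : Finset (Finset α), HierOn Finset.univ Hh ∧
        C = insert Finset.univ
          ((Hh.filter fun A => 2 ≤ A.card).biUnion fun A => genF Hh A) := by
    rintro ⟨hsat, hamp, htriv⟩
    exact mainThm (Finset.univ : Finset α).card Finset.univ rfl C
      ⟨fun A _ => Finset.subset_univ A, hC, htriv hUnivCtriv,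
       fun x _ => htriv (hSingCtriv x), hsat, hamp⟩
  have hadjOf : ∀ Hh : Finset (Finset α), HierOn Finset.univ Hh →
      C = insert Finset.univ
        ((Hh.filter fun A => 2 ≤ A.card).biUnion fun A => genF Hh A) →
      Hh = adjF C := by
    intro Hh hHh hCeq
    ext A
    unfold adjF
    rw [Finset.mem_filter]
    constructor
    · intro hA
      exact ⟨Finset.mem_univ A, hHh.2.1 A hA, SL_compat hHh hCeq A hA⟩
    · rintro ⟨-, hne', hcomp⟩
      exact SL_adj hHh hCeq A (Finset.subset_univ A) hne' hcomp
  refine ⟨⟨?_, ?_⟩, ?_⟩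
  · intro hLHS
    obtain ⟨Hh, hHh, hCeq⟩ := forward hLHS
    have htrivsub : CtrivF α ⊆ Hh := by
      intro A hA
      rcases mem_CtrivF.1 hA with ⟨x, rfl⟩ | rfl
      · exact hHh.2.2.2.1 x (Finset.mem_univ x)
      · exact hHh.2.2.1
    exact ⟨Hh, ⟨hHh.2.1, hHh.2.2.2.2⟩, htrivsub, hadjOf Hh hHh hCeq, hCeq,
      fun A hA h2 => SL_UnotinGen hHh A hA h2,
      fun A hA A' hA' h2 h2' hne' => SL_disj hHh A hA A' hA' h2 h2' hne'⟩
  · rintro ⟨Hh, hHier, htrivH, hadj, hCeq, hnotin, hdisj⟩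
    have hHh : HierOn Finset.univ Hh := ⟨fun A _ => Finset.subset_univ A, hHier.1,
      htrivH hUnivCtriv, fun x _ => htrivH (hSingCtriv x), hHier.2⟩
    refine ⟨SL_satpw hHh hCeq, SL_ample hHh hCeq, ?_⟩
    intro A hA
    rcases mem_CtrivF.1 hA with ⟨x, rfl⟩ | rfl
    · exact SL_HsubC hHh hCeq (hHh.2.2.2.1 x (Finset.mem_univ x))
    · rw [hCeq]; exact Finset.mem_insert_self _ _
  · intro hLHS
    obtain ⟨Hh, hHh, hCeq⟩ := forward hLHS
    have hadj := hadjOf Hh hHh hCeq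
    rw [← hadj]
    have hfe : Hh.filter (fun A => 1 < A.card) = Hh.filter (fun A => 2 ≤ A.card) :=
      Finset.filter_congr (fun x _ => Iff.rfl)
    rw [hfe]
    exact SL_card hHh hCeq
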